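/- arXiv:math/0307109 — 6 statements merged into one kernel-verified Lean document; each statement's English description precedes it below -/
import Mathlib

section
/- There exists a universal constant C > 0 such that for all ν ≥ 1 and all γ ∈ [0,1), ∫₀^{ν/2} J_ν(t)/t^γ dt ≤ C ν^{-(1/2+γ)} (e/4)^ν, where J_ν is the Bessel function of the first kind of order ν. -/
open Real MeasureTheory

/-- The Bessel function of the first kind of order `ν`, defined by its power series. -/
noncomputable def besselJ (ν t : ℝ) : ℝ :=
  ∑' m : ℕ, (-1 : ℝ) ^ m * (t / 2) ^ (ν + 2 * (m : ℝ)) / ((m.factorial : ℝ) * Real.Gamma (ν + m + 1))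

lemma cplx_eq_real {p q : ℝ} (x : ℝ) (hx : x ∈ Set.Ioo (0:ℝ) 1) :
    (x:ℂ) ^ ((p:ℂ) - 1) * (1 - (x:ℂ)) ^ ((q:ℂ) - 1) = ((x ^ (p-1) * (1-x) ^ (q-1) : ℝ) : ℂ) := by
  have h1 : ((p:ℂ) - 1) = ((p - 1 : ℝ) : ℂ) := by push_cast; ring
  have h2 : ((q:ℂ) - 1) = ((q - 1 : ℝ) : ℂ) := by push_cast; ring
  have h3 : (1 - (x:ℂ)) = ((1 - x : ℝ) : ℂ) := by push_cast; ring
  rw [h1, h2, h3, ← Complex.ofReal_cpow hx.1.le, ← Complex.ofReal_cpow (by linarith [hx.2] : (0:ℝ) ≤ 1 - x),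
    ← Complex.ofReal_mul]

lemma integrableOn_beta {p q : ℝ} (hp : 0 < p) (hq : 0 < q) :
    IntegrableOn (fun u : ℝ => u ^ (p-1) * (1-u) ^ (q-1)) (Set.Ioo 0 1) := by
  have h := (Complex.betaIntegral_convergent (u := (p:ℂ)) (v := (q:ℂ)) (by simpa) (by simpa))
  rw [intervalIntegrable_iff_integrableOn_Ioc_of_le zero_le_one] at h
  have h2 : IntegrableOn (fun x : ℝ => ‖(x:ℂ) ^ ((p:ℂ) - 1) * (1 - (x:ℂ)) ^ ((q:ℂ) - 1)‖)
      (Set.Ioo 0 1) := IntegrableOn.mono_set h.norm Set.Ioo_subset_Ioc_self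
  refine h2.congr_fun (fun x hx => ?_) measurableSet_Ioo
  dsimp only
  rw [cplx_eq_real x hx, Complex.norm_real, Real.norm_eq_abs, abs_of_nonneg]
  have h0 : (0:ℝ) ≤ x := hx.1.le
  have h1 : (0:ℝ) ≤ 1 - x := by linarith [hx.2]
  positivity

lemma realBeta {p q : ℝ} (hp : 0 < p) (hq : 0 < q) :
    ∫ u in Set.Ioo (0:ℝ) 1, u ^ (p-1) * (1-u) ^ (q-1) =
      Real.Gamma p * Real.Gamma q / Real.Gamma (p+q) := by
  have key := Complex.Gamma_mul_Gamma_eq_betaIntegral (s := (p:ℂ)) (t := (q:ℂ)) (by simpa) (by simpa)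
  have hbeta : Complex.betaIntegral (p:ℂ) (q:ℂ) =
      ((∫ u in Set.Ioo (0:ℝ) 1, u ^ (p-1) * (1-u) ^ (q-1) : ℝ) : ℂ) := by
    rw [Complex.betaIntegral, intervalIntegral.integral_of_le zero_le_one,
      integral_Ioc_eq_integral_Ioo]
    exact (setIntegral_congr_fun measurableSet_Ioo (fun x hx => cplx_eq_real x hx)).trans
      integral_ofReal
  rw [hbeta, show ((p:ℂ) + q) = ((p + q : ℝ) : ℂ) by push_cast; ring, Complex.Gamma_ofReal,
    Complex.Gamma_ofReal, Complex.Gamma_ofReal, ← Complex.ofReal_mul, ← Complex.ofReal_mul,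
    Complex.ofReal_inj] at key
  have hne : Real.Gamma (p + q) ≠ 0 := (Real.Gamma_pos_of_pos (by linarith)).ne'
  rw [eq_div_iff hne]
  linarith [key]

lemma factorial_mul_gamma_half (m : ℕ) :
    (m.factorial : ℝ) * Real.Gamma ((m:ℝ) + 1/2) = (2*m).factorial * √π / 4 ^ m := by
  induction m with
  | zero => norm_num [show ((0:ℕ):ℝ) + 1/2 = 1/2 by norm_num, Real.Gamma_one_half_eq]
  | succ m ih =>
    have hne : ((m:ℝ) + 1/2) ≠ 0 := by positivity
    have hG' : Real.Gamma (((m+1:ℕ):ℝ) + 1/2) = ((m:ℝ) + 1/2) * Real.Gamma ((m:ℝ) + 1/2) := by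
      rw [show (((m+1:ℕ)):ℝ) + 1/2 = ((m:ℝ) + 1/2) + 1 by push_cast; ring, Real.Gamma_add_one hne]
    have h1 : ((m+1).factorial : ℝ) = ((m:ℝ)+1) * m.factorial := by
      rw [Nat.factorial_succ]; push_cast; ring
    have h2 : ((2*(m+1)).factorial : ℝ) = (2*(m:ℝ)+2) * (2*(m:ℝ)+1) * (2*m).factorial := by
      rw [show 2*(m+1) = (2*m+1)+1 by ring, Nat.factorial_succ, Nat.factorial_succ]
      push_cast; ring
    rw [hG', h1, h2, show (4:ℝ) ^ (m+1) = 4 * 4 ^ m by ring]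
    linear_combination (((m:ℝ)+1) * ((m:ℝ) + 1/2)) * ih

lemma hasSum_cos_sqrt {y : ℝ} (hy : 0 ≤ y) :
    HasSum (fun m : ℕ => (-1:ℝ)^m * y^m / (m.factorial * Real.Gamma ((m:ℝ) + 1/2)))
      (Real.cos (2*√y) / √π) := by
  have h := (Real.hasSum_cos (2*√y)).div_const √π
  have heq : (fun m : ℕ => (-1:ℝ)^m * y^m / (m.factorial * Real.Gamma ((m:ℝ) + 1/2))) =
      fun m : ℕ => (-1:ℝ)^m * (2*√y)^(2*m) / ((2*m).factorial : ℝ) / √π := by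
    funext m
    have hpow : (2*√y)^(2*m) = 4^m * y^m := by
      rw [mul_pow, pow_mul, pow_mul]
      norm_num [Real.sq_sqrt hy]
    rw [hpow, factorial_mul_gamma_half m]
    have h1 : ((2*m).factorial : ℝ) ≠ 0 := by positivity
    have h2 : √π ≠ 0 := by positivity
    have h3 : (4:ℝ)^m ≠ 0 := by positivity
    field_simp
  rw [heq]
  exact h

lemma gamma_le_gamma_add {s : ℝ} (hs : 1 ≤ s) (m : ℕ) : Real.Gamma s ≤ Real.Gamma (s + m) := by
  induction m with
  | zero => simp
  | succ m ih =>
    have h1 : s + ((m+1:ℕ):ℝ) = (s + m) + 1 := by push_cast; ring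
    rw [h1, Real.Gamma_add_one (by positivity : s + (m:ℝ) ≠ 0)]
    calc Real.Gamma s ≤ Real.Gamma (s + m) := ih
    _ = 1 * Real.Gamma (s + m) := (one_mul _).symm
    _ ≤ (s + m) * Real.Gamma (s + m) := by
        have := Real.Gamma_pos_of_pos (show 0 < s + (m:ℝ) by positivity)
        nlinarith

lemma abs_tsum_le {ν x : ℝ} (hν : 1 ≤ ν) (hx : 0 ≤ x) :
    |∑' m : ℕ, (-1:ℝ)^m * x^m / (m.factorial * Real.Gamma (ν + m + 1))| ≤
      1 / Real.Gamma (ν + 1) := by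
  have hν2 : (0:ℝ) < ν + 1/2 := by linarith
  have hGν2 : (0:ℝ) < Real.Gamma (ν + 1/2) := Real.Gamma_pos_of_pos hν2
  have hGm : ∀ m : ℕ, (0:ℝ) < Real.Gamma ((m:ℝ) + 1/2) :=
    fun m => Real.Gamma_pos_of_pos (by positivity)
  have hGνm : ∀ m : ℕ, (0:ℝ) < Real.Gamma (ν + m + 1) :=
    fun m => Real.Gamma_pos_of_pos (by positivity)
  have hfm : ∀ m : ℕ, (0:ℝ) < (m.factorial : ℝ) := fun m => by positivity
  set F : ℕ → ℝ → ℝ := fun m u =>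
    ((-1:ℝ)^m * x^m / (m.factorial * Real.Gamma ((m:ℝ)+1/2) * Real.Gamma (ν+1/2))) *
      (u ^ (((m:ℝ)+1/2)-1) * (1-u) ^ ((ν+1/2)-1)) with hF
  have hFint : ∀ m : ℕ, IntegrableOn (F m) (Set.Ioo 0 1) :=
    fun m => (integrableOn_beta (by positivity : (0:ℝ) < (m:ℝ)+1/2) hν2).const_mul _
  have hplus : ∀ m : ℕ, ((m:ℝ)+1/2) + (ν+1/2) = ν + m + 1 := fun m => by ring
  have hFval : ∀ m : ℕ, ∫ u in Set.Ioo (0:ℝ) 1, F m u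
      = (-1:ℝ)^m * x^m / (m.factorial * Real.Gamma (ν + m + 1)) := by
    intro m
    rw [hF]
    simp only []
    rw [integral_const_mul, realBeta (by positivity : (0:ℝ) < (m:ℝ)+1/2) hν2, hplus m]
    have h1 := (hGm m).ne'
    have h2 := hGν2.ne'
    have h3 := (hGνm m).ne'
    have h4 := (hfm m).ne'
    field_simp
  have hFnorm : ∀ m : ℕ, ∫ u in Set.Ioo (0:ℝ) 1, ‖F m u‖
      = x^m / (m.factorial * Real.Gamma (ν + m + 1)) := by
    intro m
    have : ∫ u in Set.Ioo (0:ℝ) 1, ‖F m u‖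
        = ∫ u in Set.Ioo (0:ℝ) 1,
            (x^m / (m.factorial * Real.Gamma ((m:ℝ)+1/2) * Real.Gamma (ν+1/2))) *
              (u ^ (((m:ℝ)+1/2)-1) * (1-u) ^ ((ν+1/2)-1)) := by
      refine setIntegral_congr_fun measurableSet_Ioo (fun u hu => ?_)
      have hu0 : (0:ℝ) ≤ u := hu.1.le
      have hu1 : (0:ℝ) ≤ 1 - u := by linarith [hu.2]
      rw [hF]
      simp only []
      have hw : (0:ℝ) ≤ u ^ (((m:ℝ)+1/2)-1) * (1-u) ^ ((ν+1/2)-1) := by positivity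
      have hD : (0:ℝ) < (m.factorial : ℝ) * Real.Gamma ((m:ℝ)+1/2) * Real.Gamma (ν+1/2) := by
        have := hGm m; have := hGν2; have := hfm m; positivity
      rw [Real.norm_eq_abs, abs_mul, abs_of_nonneg hw, abs_div, abs_mul, abs_pow, abs_neg,
        abs_one, one_pow, one_mul, abs_pow, abs_of_nonneg hx, abs_of_nonneg hD.le]
    rw [this, integral_const_mul, realBeta (by positivity : (0:ℝ) < (m:ℝ)+1/2) hν2, hplus m]
    have h1 := (hGm m).ne'
    have h2 := hGν2.ne'
    have h3 := (hGνm m).ne'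
    have h4 := (hfm m).ne'
    field_simp
  have hsummable : Summable (fun m : ℕ => ∫ u in Set.Ioo (0:ℝ) 1, ‖F m u‖) := by
    refine Summable.of_nonneg_of_le (fun m => ?_) (fun m => ?_)
      ((Real.summable_pow_div_factorial x).mul_right (1 / Real.Gamma (ν+1)))
    · rw [hFnorm m]; positivity
    · rw [hFnorm m]
      have hmono : Real.Gamma (ν+1) ≤ Real.Gamma (ν + m + 1) := by
        have := gamma_le_gamma_add (show (1:ℝ) ≤ ν + 1 by linarith) m
        rwa [show ν + 1 + (m:ℝ) = ν + m + 1 by ring] at this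
      have hG1 : (0:ℝ) < Real.Gamma (ν+1) := Real.Gamma_pos_of_pos (by linarith)
      rw [div_mul_div_comm, mul_one]
      have hle : (m.factorial : ℝ) * Real.Gamma (ν+1) ≤ m.factorial * Real.Gamma (ν+m+1) :=
        mul_le_mul_of_nonneg_left hmono (hfm m).le
      exact div_le_div_of_nonneg_left (by positivity) (by positivity) hle
  have key := integral_tsum_of_summable_integral_norm hFint hsummable
  have htsum : ∑' m : ℕ, (-1:ℝ)^m * x^m / (m.factorial * Real.Gamma (ν + m + 1))
      = ∫ u in Set.Ioo (0:ℝ) 1, ∑' m : ℕ, F m u := by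
    rw [← key]
    exact tsum_congr fun m => (hFval m).symm
  set G : ℝ → ℝ := fun u => (u ^ ((1:ℝ)/2-1) * (1-u) ^ ((ν+1/2)-1)) *
      (Real.cos (2*√(x*u)) / (Real.Gamma (ν+1/2) * √π)) with hGdef
  have hpt : ∀ u ∈ Set.Ioo (0:ℝ) 1, (∑' m : ℕ, F m u) = G u := by
    intro u hu
    have hu0 : (0:ℝ) < u := hu.1
    have hsplit : ∀ m : ℕ, F m u =
        ((u ^ ((1:ℝ)/2-1) * (1-u)^((ν+1/2)-1)) / Real.Gamma (ν+1/2)) *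
          ((-1:ℝ)^m * (x*u)^m / (m.factorial * Real.Gamma ((m:ℝ)+1/2))) := by
      intro m
      have he : ((m:ℝ)+1/2-1) = (m:ℝ) + ((1:ℝ)/2-1) := by ring
      rw [hF]
      simp only []
      rw [he, Real.rpow_add hu0, Real.rpow_natCast, mul_pow]
      ring
    rw [tsum_congr hsplit,
      ((hasSum_cos_sqrt (mul_nonneg hx hu0.le)).mul_left
        ((u ^ ((1:ℝ)/2-1) * (1-u)^((ν+1/2)-1)) / Real.Gamma (ν+1/2))).tsum_eq, hGdef]
    have h2 := hGν2.ne'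
    have h3 : √π ≠ 0 := by positivity
    field_simp
  have hGeq : ∑' m : ℕ, (-1:ℝ)^m * x^m / (m.factorial * Real.Gamma (ν + m + 1))
      = ∫ u in Set.Ioo (0:ℝ) 1, G u := by
    rw [htsum]
    exact setIntegral_congr_fun measurableSet_Ioo hpt
  set M : ℝ → ℝ := fun u => (u ^ ((1:ℝ)/2-1) * (1-u) ^ ((ν+1/2)-1)) *
      (1/(Real.Gamma (ν+1/2) * √π)) with hMdef
  have hMint : IntegrableOn M (Set.Ioo (0:ℝ) 1) := by
    have h12 : (0:ℝ) < 1/2 := by norm_num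
    exact (integrableOn_beta h12 hν2).mul_const _
  have hπ : (0:ℝ) < √π := Real.sqrt_pos.2 Real.pi_pos
  have hbound : ∀ u ∈ Set.Ioo (0:ℝ) 1, ‖G u‖ ≤ M u := by
    intro u hu
    have hu0 : (0:ℝ) ≤ u := hu.1.le
    have hu1 : (0:ℝ) ≤ 1 - u := by linarith [hu.2]
    have hw : (0:ℝ) ≤ u ^ ((1:ℝ)/2-1) * (1-u) ^ ((ν+1/2)-1) := by positivity
    rw [hGdef, hMdef]
    simp only []
    rw [Real.norm_eq_abs, abs_mul, abs_of_nonneg hw]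
    refine mul_le_mul_of_nonneg_left ?_ hw
    rw [abs_div, abs_of_nonneg (by positivity : (0:ℝ) ≤ Real.Gamma (ν+1/2) * √π)]
    exact div_le_div_of_nonneg_right (Real.abs_cos_le_one _) (by positivity)
  have hMval : ∫ u in Set.Ioo (0:ℝ) 1, M u = 1 / Real.Gamma (ν + 1) := by
    rw [hMdef]
    simp only []
    rw [integral_mul_const, realBeta (by norm_num : (0:ℝ) < 1/2) hν2,
      show (1:ℝ)/2 + (ν + 1/2) = ν + 1 by ring, Real.Gamma_one_half_eq]
    have h2 := hGν2.ne'
    have h3 : √π ≠ 0 := hπ.ne'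
    have h4 : Real.Gamma (ν+1) ≠ 0 := (Real.Gamma_pos_of_pos (by linarith)).ne'
    field_simp
  rw [hGeq, ← hMval, ← Real.norm_eq_abs]
  exact (norm_integral_le_integral_norm G).trans
    (integral_mono_of_nonneg (Filter.Eventually.of_forall fun u => norm_nonneg _) hMint
      ((ae_restrict_iff' measurableSet_Ioo).2 (Filter.Eventually.of_forall hbound)))

lemma summable_besselJ_terms (ν : ℝ) (hν : 1 ≤ ν) (t : ℝ) :
    Summable (fun m : ℕ =>
      (-1:ℝ)^m * (t/2) ^ (ν + 2*(m:ℝ)) / (m.factorial * Real.Gamma (ν + m + 1))) := by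
  have hGνm : ∀ m : ℕ, (0:ℝ) < Real.Gamma (ν + m + 1) :=
    fun m => Real.Gamma_pos_of_pos (by positivity)
  have hG1 : (0:ℝ) < Real.Gamma (ν + 1) := Real.Gamma_pos_of_pos (by linarith)
  have hfm : ∀ m : ℕ, (0:ℝ) < (m.factorial : ℝ) := fun m => by positivity
  rw [← summable_abs_iff]
  set b := |t/2| with hb
  have hb0 : 0 ≤ b := abs_nonneg _
  refine Summable.of_nonneg_of_le (fun m => abs_nonneg _) (fun m => ?_)
    (((Real.summable_pow_div_factorial (b^2)).mul_right (b ^ ν / Real.Gamma (ν+1))))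
  have h1 : |(-1:ℝ)^m * (t/2) ^ (ν + 2*(m:ℝ)) / (m.factorial * Real.Gamma (ν + m + 1))|
      ≤ b ^ (ν + 2*(m:ℝ)) / (m.factorial * Real.Gamma (ν + m + 1)) := by
    rw [abs_div, abs_mul, abs_pow, abs_neg, abs_one, one_pow, one_mul,
      abs_of_nonneg (by positivity : (0:ℝ) ≤ (m.factorial:ℝ) * Real.Gamma (ν + m + 1))]
    exact div_le_div_of_nonneg_right (Real.abs_rpow_le_abs_rpow _ _) (by positivity)
  refine h1.trans ?_
  have h2 : b ^ (ν + 2*(m:ℝ)) ≤ b ^ ν * (b^2)^m := by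
    rcases eq_or_lt_of_le hb0 with hb' | hb'
    · rw [← hb']
      rw [Real.zero_rpow (by positivity : ν + 2*(m:ℝ) ≠ 0)]
      positivity
    · rw [Real.rpow_add hb', show (2*(m:ℝ)) = ((2*m : ℕ):ℝ) by push_cast; ring,
        Real.rpow_natCast, pow_mul]
  refine (div_le_div_of_nonneg_right h2 (by positivity)).trans ?_
  have hmono : Real.Gamma (ν+1) ≤ Real.Gamma (ν + m + 1) := by
    have := gamma_le_gamma_add (show (1:ℝ) ≤ ν + 1 by linarith) m
    rwa [show ν + 1 + (m:ℝ) = ν + m + 1 by ring] at this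
  rw [div_mul_div_comm]
  rw [show b ^ ν * (b^2)^m = (b^2)^m * b^ν by ring, mul_div_assoc, mul_div_assoc]
  refine mul_le_mul_of_nonneg_left ?_ (by positivity)
  exact div_le_div_of_nonneg_left (by positivity) (by positivity)
    (mul_le_mul_of_nonneg_left hmono (hfm m).le)

lemma measurable_besselJ (ν : ℝ) (hν : 1 ≤ ν) : Measurable (besselJ ν) := by
  apply measurable_of_tendsto_metrizable
    (f := fun n (t : ℝ) => ∑ m ∈ Finset.range n,
      (-1:ℝ)^m * (t/2) ^ (ν + 2*(m:ℝ)) / (m.factorial * Real.Gamma (ν + m + 1)))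
  · intro n
    refine Finset.measurable_sum _ (fun m _ => ?_)
    have hc : Continuous (fun t : ℝ => (t/2) ^ (ν + 2*(m:ℝ))) :=
      (Real.continuous_rpow_const (by positivity)).comp (continuous_id.div_const 2)
    exact ((hc.measurable.const_mul _).div_const _)
  · rw [tendsto_pi_nhds]
    intro t
    exact (summable_besselJ_terms ν hν t).hasSum.tendsto_sum_nat

lemma abs_besselJ_le {ν t : ℝ} (hν : 1 ≤ ν) (ht : 0 < t) :
    |besselJ ν t| ≤ (t/2) ^ ν / Real.Gamma (ν + 1) := by
  have ht2 : (0:ℝ) < t/2 := by linarith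
  have hre : besselJ ν t = (t/2) ^ ν *
      ∑' m : ℕ, (-1:ℝ)^m * ((t/2)^2)^m / (m.factorial * Real.Gamma (ν + m + 1)) := by
    rw [besselJ, ← tsum_mul_left]
    refine tsum_congr (fun m => ?_)
    rw [Real.rpow_add ht2, show (2*(m:ℝ)) = ((2*m : ℕ):ℝ) by push_cast; ring,
      Real.rpow_natCast, pow_mul]
    ring
  rw [hre, abs_mul, abs_of_nonneg (Real.rpow_nonneg ht2.le ν)]
  calc (t/2)^ν * |∑' m : ℕ, (-1:ℝ)^m * ((t/2)^2)^m / (m.factorial * Real.Gamma (ν + m + 1))|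
      ≤ (t/2)^ν * (1 / Real.Gamma (ν+1)) :=
        mul_le_mul_of_nonneg_left (abs_tsum_le hν (sq_nonneg _)) (Real.rpow_nonneg ht2.le ν)
    _ = (t/2) ^ ν / Real.Gamma (ν + 1) := by rw [mul_one_div]

lemma gamma_stirling : ∃ c : ℝ, 0 < c ∧ ∀ ν : ℝ, 1 ≤ ν →
    c * ν ^ (ν + 1/2) * Real.exp (-ν) ≤ Real.Gamma (ν + 1) := by
  obtain ⟨a, ha, hstir⟩ := Stirling.stirlingSeq'_bounded_by_pos_constant
  refine ⟨a * √2 * Real.exp (-(3/2)), by positivity, ?_⟩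
  intro ν hν
  have hν0 : (0:ℝ) < ν := by linarith
  set n := ⌊ν⌋₊ with hn
  have hn1 : 1 ≤ n := Nat.le_floor (by exact_mod_cast hν)
  have hnν : (n:ℝ) ≤ ν := Nat.floor_le hν0.le
  have hνn : ν < n + 1 := Nat.lt_floor_add_one ν
  have hn0 : (0:ℝ) < n := by exact_mod_cast hn1
  have hn0' : (1:ℝ) ≤ n := by exact_mod_cast hn1
  set θ := ν - n with hθ
  have hθ0 : 0 ≤ θ := by simp only [hθ]; linarith
  have hθ1 : θ < 1 := by simp only [hθ]; linarith
  have hΓn : (0:ℝ) < Real.Gamma n := Real.Gamma_pos_of_pos hn0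
  have hΓn1 : (0:ℝ) < Real.Gamma ((n:ℝ)+1) := Real.Gamma_pos_of_pos (by linarith)
  have hΓν1 : (0:ℝ) < Real.Gamma (ν+1) := Real.Gamma_pos_of_pos (by linarith)
  -- Step A : log-convexity interpolation
  have hstepA : (n.factorial : ℝ) * (n:ℝ) ^ θ ≤ Real.Gamma (ν + 1) := by
    have h1θ : (0:ℝ) < 1 + θ := by linarith
    have hxy : (θ/(1+θ)) • (n:ℝ) + (1/(1+θ)) • (ν+1) = (n:ℝ)+1 := by
      simp only [smul_eq_mul, hθ]
      rw [div_mul_eq_mul_div, div_mul_eq_mul_div, ← add_div, div_eq_iff (ne_of_gt (by linarith))]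
      ring
    have hconv := Real.convexOn_log_Gamma.2 (Set.mem_Ioi.2 hn0)
      (Set.mem_Ioi.2 (show (0:ℝ) < ν+1 by linarith))
      (by positivity : (0:ℝ) ≤ θ/(1+θ)) (by positivity : (0:ℝ) ≤ 1/(1+θ))
      (by rw [← add_div, div_eq_one_iff_eq h1θ.ne']; ring)
    rw [hxy] at hconv
    simp only [Function.comp_apply, smul_eq_mul] at hconv
    -- hconv : log Γ(n+1) ≤ θ/(1+θ) * log Γ n + 1/(1+θ) * log Γ(ν+1)
    have hlog : Real.log (Real.Gamma ((n:ℝ)+1)) + θ * Real.log n ≤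
        Real.log (Real.Gamma (ν+1)) := by
      have hGn1 : Real.Gamma ((n:ℝ)+1) = n * Real.Gamma n :=
        Real.Gamma_add_one hn0.ne'
      have hlogn1 : Real.log (Real.Gamma ((n:ℝ)+1)) =
          Real.log n + Real.log (Real.Gamma n) := by
        rw [hGn1, Real.log_mul hn0.ne' hΓn.ne']
      -- multiply hconv by (1+θ)
      have := mul_le_mul_of_nonneg_left hconv h1θ.le
      rw [mul_add] at this
      rw [hlogn1] at this ⊢
      have e1 : (1+θ) * (θ/(1+θ) * Real.log (Real.Gamma n)) = θ * Real.log (Real.Gamma n) := by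
        field_simp
      have e2 : (1+θ) * (1/(1+θ) * Real.log (Real.Gamma (ν+1))) = Real.log (Real.Gamma (ν+1)) := by
        field_simp
      rw [e1, e2] at this
      nlinarith [this]
    have := Real.exp_le_exp.2 hlog
    rw [Real.exp_add, Real.exp_log hΓν1, Real.exp_log hΓn1] at this
    calc (n.factorial : ℝ) * (n:ℝ) ^ θ
        = Real.Gamma ((n:ℝ)+1) * Real.exp (θ * Real.log n) := by
          rw [Real.Gamma_nat_eq_factorial, Real.rpow_def_of_pos hn0, mul_comm (Real.log _) θ]
      _ ≤ Real.Gamma (ν+1) := this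
  -- Step B : Stirling for n!
  have hstepB : a * √(2*n) * ((n:ℝ)/Real.exp 1)^n ≤ (n.factorial : ℝ) := by
    have h := hstir (n-1)
    rw [show n - 1 + 1 = n by omega] at h
    have hden : (0:ℝ) < √(2*n) * ((n:ℝ)/Real.exp 1)^n := by positivity
    rw [Stirling.stirlingSeq, le_div_iff₀ hden] at h
    linarith [h]
  -- Step C : arithmetic
  have hkey : a * √2 * Real.exp (-(3/2)) * ν ^ (ν + 1/2) * Real.exp (-ν) ≤
      a * √(2*n) * ((n:ℝ)/Real.exp 1)^n * (n:ℝ) ^ θ := by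
    have hlogν : Real.log ν ≤ Real.log n + θ/n := by
      have hd : (0:ℝ) < ν / n := by positivity
      have h1 : Real.log (ν/n) ≤ ν/n - 1 := Real.log_le_sub_one_of_pos hd
      have h2 : Real.log (ν/n) = Real.log ν - Real.log n := Real.log_div hν0.ne' hn0.ne'
      have h3 : ν/n - 1 = θ/n := by rw [hθ]; field_simp
      linarith [h1, h2.symm.le, h3.le]
    have hlogn0 : 0 ≤ Real.log n := Real.log_nonneg hn0'
    have hmain : Real.log ν * (ν + 1/2) ≤
        Real.log n * ((n:ℝ) + 1/2) + Real.log n * θ + (θ + 3/2) := by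
      have hb : Real.log ν * (ν + 1/2) ≤ (Real.log n + θ/n) * (ν + 1/2) :=
        mul_le_mul_of_nonneg_right hlogν (by linarith)
      have hc : (θ/n) * (ν + 1/2) ≤ θ + 3/2 := by
        rw [div_mul_eq_mul_div, div_le_iff₀ hn0]
        nlinarith [hθ0, hθ1, hn0', hnν, hνn]
      have hd : Real.log n * (ν + 1/2) = Real.log n * ((n:ℝ) + 1/2) + Real.log n * θ := by
        have : ν = (n:ℝ) + θ := by simp [hθ]
        rw [this]; ring
      nlinarith [hb, hc, hd]
    have hrν : ν ^ (ν + 1/2) = Real.exp (Real.log ν * (ν + 1/2)) :=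
      Real.rpow_def_of_pos hν0 _
    have hrn : (n:ℝ) ^ ((n:ℝ) + 1/2) = Real.exp (Real.log n * ((n:ℝ) + 1/2)) :=
      Real.rpow_def_of_pos hn0 _
    have hrθ : (n:ℝ) ^ θ = Real.exp (Real.log n * θ) := Real.rpow_def_of_pos hn0 _
    have hineq : ν ^ (ν + 1/2) ≤
        (n:ℝ) ^ ((n:ℝ) + 1/2) * (n:ℝ) ^ θ * Real.exp (θ + 3/2) := by
      rw [hrν, hrn, hrθ, ← Real.exp_add, ← Real.exp_add]
      exact Real.exp_le_exp.2 hmain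
    -- now multiply things out
    have hRHS : a * √(2*n) * ((n:ℝ)/Real.exp 1)^n * (n:ℝ) ^ θ =
        a * √2 * ((n:ℝ) ^ ((n:ℝ) + 1/2) * (n:ℝ) ^ θ) * Real.exp (-(n:ℝ)) := by
      have h1 : √(2*(n:ℝ)) = √2 * √(n:ℝ) := by
        rw [Real.sqrt_mul (by norm_num : (0:ℝ) ≤ 2)]
      have h2 : ((n:ℝ)/Real.exp 1)^n = (n:ℝ)^(n:ℕ) * Real.exp (-(n:ℝ)) := by
        rw [div_pow, Real.exp_one_pow, div_eq_mul_inv, ← Real.exp_neg]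
      have h3 : (n:ℝ) ^ ((n:ℝ) + 1/2) = (n:ℝ)^(n:ℕ) * √(n:ℝ) := by
        rw [Real.rpow_add hn0, Real.rpow_natCast, Real.sqrt_eq_rpow]
      rw [h1, h2, h3]
      ring
    rw [hRHS]
    have hθν : Real.exp (-(3/2)) * Real.exp (-ν) * Real.exp (θ + 3/2) = Real.exp (-(n:ℝ)) := by
      rw [← Real.exp_add, ← Real.exp_add]
      congr 1
      simp only [hθ]
      ring
    calc a * √2 * Real.exp (-(3/2)) * ν ^ (ν + 1/2) * Real.exp (-ν)
        ≤ a * √2 * Real.exp (-(3/2)) *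
            ((n:ℝ) ^ ((n:ℝ) + 1/2) * (n:ℝ) ^ θ * Real.exp (θ + 3/2)) * Real.exp (-ν) := by
          have hpos : (0:ℝ) ≤ a * √2 * Real.exp (-(3/2)) := by positivity
          have hepos : (0:ℝ) ≤ Real.exp (-ν) := (Real.exp_pos _).le
          exact mul_le_mul_of_nonneg_right (mul_le_mul_of_nonneg_left hineq hpos) hepos
      _ = a * √2 * ((n:ℝ) ^ ((n:ℝ) + 1/2) * (n:ℝ) ^ θ) *
            (Real.exp (-(3/2)) * Real.exp (-ν) * Real.exp (θ + 3/2)) := by ring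
      _ = a * √2 * ((n:ℝ) ^ ((n:ℝ) + 1/2) * (n:ℝ) ^ θ) * Real.exp (-(n:ℝ)) := by rw [hθν]
  refine hkey.trans ?_
  calc a * √(2*n) * ((n:ℝ)/Real.exp 1)^n * (n:ℝ) ^ θ
      ≤ (n.factorial : ℝ) * (n:ℝ) ^ θ :=
        mul_le_mul_of_nonneg_right hstepB (Real.rpow_nonneg hn0.le _)
    _ ≤ Real.Gamma (ν + 1) := hstepA

theorem integral_besselJ_div_rpow_small :
    ∃ C > 0, ∀ ν : ℝ, 1 ≤ ν → ∀ γ : ℝ, 0 ≤ γ → γ < 1 →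
      ∫ t in Set.Ioo (0 : ℝ) (ν / 2), besselJ ν t / t ^ γ ≤
        C * ν ^ (-(1 / 2 + γ)) * (Real.exp 1 / 4) ^ ν := by
  obtain ⟨c, hc, hst⟩ := gamma_stirling
  refine ⟨1/c, by positivity, ?_⟩
  intro ν hν γ hγ0 hγ1
  have hν0 : (0:ℝ) < ν := by linarith
  set T := ν / 2 with hTdef
  have hT : (0:ℝ) < T := by simp only [hTdef]; linarith
  have hΓ : (0:ℝ) < Real.Gamma (ν+1) := Real.Gamma_pos_of_pos (by linarith)
  have hexp : (-1:ℝ) < ν - γ := by linarith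
  set g : ℝ → ℝ := fun t => t ^ (ν-γ) * (1/((2:ℝ)^ν * Real.Gamma (ν+1))) with hgdef
  have h2ν : (0:ℝ) < (2:ℝ)^ν := Real.rpow_pos_of_pos two_pos ν
  have hg_int : IntegrableOn g (Set.Ioo 0 T) := by
    have h := intervalIntegral.intervalIntegrable_rpow' (a:=0) (b:=T) hexp
    rw [intervalIntegrable_iff_integrableOn_Ioc_of_le hT.le] at h
    exact (h.mono_set Set.Ioo_subset_Ioc_self).mul_const _
  have habs : ∀ t ∈ Set.Ioo (0:ℝ) T, |besselJ ν t / t ^ γ| ≤ g t := by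
    intro t ht
    have ht0 : (0:ℝ) < t := ht.1
    have htγ : (0:ℝ) < t ^ γ := Real.rpow_pos_of_pos ht0 γ
    rw [abs_div, abs_of_nonneg htγ.le]
    have h1 : |besselJ ν t| / t^γ ≤ ((t/2)^ν / Real.Gamma (ν+1)) / t^γ :=
      div_le_div_of_nonneg_right (abs_besselJ_le hν ht0) htγ.le
    refine h1.trans_eq ?_
    simp only [hgdef]
    have h2 : (t/2)^ν = t^ν / (2:ℝ)^ν := Real.div_rpow ht0.le two_pos.le ν
    have h3 : t ^ (ν-γ) = t^ν / t^γ := Real.rpow_sub ht0 ν γ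
    rw [h2, h3]
    rw [div_div, div_div, div_mul_eq_mul_div, mul_one_div, div_div]
    ring_nf
  have hf_meas : AEStronglyMeasurable (fun t => besselJ ν t / t ^ γ)
      (volume.restrict (Set.Ioo 0 T)) :=
    ((measurable_besselJ ν hν).div
      ((Real.continuous_rpow_const hγ0).measurable)).aestronglyMeasurable
  have hbound_ae : ∀ᵐ t ∂(volume.restrict (Set.Ioo (0:ℝ) T)),
      ‖besselJ ν t / t ^ γ‖ ≤ ‖g t‖ :=
    (ae_restrict_iff' measurableSet_Ioo).2 (Filter.Eventually.of_forall fun t ht => by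
      rw [Real.norm_eq_abs, Real.norm_eq_abs]
      exact (habs t ht).trans (le_abs_self _))
  have hf_int : IntegrableOn (fun t => besselJ ν t / t ^ γ) (Set.Ioo 0 T) :=
    MeasureTheory.Integrable.mono hg_int hf_meas hbound_ae
  have hmono : ∫ t in Set.Ioo (0:ℝ) T, besselJ ν t / t ^ γ ≤ ∫ t in Set.Ioo (0:ℝ) T, g t := by
    refine integral_mono_ae hf_int hg_int ?_
    refine (ae_restrict_iff' measurableSet_Ioo).2 (Filter.Eventually.of_forall fun t ht => ?_)
    exact (le_abs_self _).trans (habs t ht)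
  have hgval : ∫ t in Set.Ioo (0:ℝ) T, g t =
      (T ^ (ν-γ+1) / (ν-γ+1)) * (1/((2:ℝ)^ν * Real.Gamma (ν+1))) := by
    simp only [hgdef]
    rw [integral_mul_const]
    congr 1
    rw [← integral_Ioc_eq_integral_Ioo, ← intervalIntegral.integral_of_le hT.le,
      integral_rpow (Or.inl hexp), Real.zero_rpow (by linarith : ν - γ + 1 ≠ 0), sub_zero]
  refine (hmono.trans_eq hgval).trans ?_
  -- final arithmetic
  have hνγ1 : (0:ℝ) < ν - γ + 1 := by linarith
  have hstν := hst ν hν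
  have hD2pos : (0:ℝ) < (2:ℝ)^ν * ν * ((2:ℝ)^ν * (c * ν ^ (ν + 1/2) * Real.exp (-ν))) := by
    positivity
  have hT1 : T ^ (ν-γ+1) = ν ^ (ν-γ+1) / (2:ℝ) ^ (ν-γ+1) := by
    rw [hTdef, Real.div_rpow hν0.le two_pos.le]
  have hLHS : (T ^ (ν-γ+1) / (ν-γ+1)) * (1/((2:ℝ)^ν * Real.Gamma (ν+1))) =
      ν ^ (ν-γ+1) / ((2:ℝ) ^ (ν-γ+1) * (ν-γ+1) * ((2:ℝ)^ν * Real.Gamma (ν+1))) := by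
    rw [hT1]
    field_simp
  rw [hLHS]
  have hden : (2:ℝ)^ν * ν * ((2:ℝ)^ν * (c * ν ^ (ν + 1/2) * Real.exp (-ν))) ≤
      (2:ℝ) ^ (ν-γ+1) * (ν-γ+1) * ((2:ℝ)^ν * Real.Gamma (ν+1)) := by
    have h2m : (2:ℝ)^ν ≤ (2:ℝ)^(ν-γ+1) :=
      Real.rpow_le_rpow_left_iff one_lt_two |>.2 (by linarith)
    have hνm : ν ≤ ν - γ + 1 := by linarith
    gcongr
  calc ν ^ (ν-γ+1) / ((2:ℝ) ^ (ν-γ+1) * (ν-γ+1) * ((2:ℝ)^ν * Real.Gamma (ν+1)))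
      ≤ ν ^ (ν-γ+1) / ((2:ℝ)^ν * ν * ((2:ℝ)^ν * (c * ν ^ (ν + 1/2) * Real.exp (-ν)))) :=
        div_le_div_of_nonneg_left (Real.rpow_nonneg hν0.le _) hD2pos hden
    _ = 1/c * ν ^ (-(1/2 + γ)) * (Real.exp 1 / 4) ^ ν := by
        have hA : ν ^ (ν-γ+1) = ν ^ (ν + 1/2) * ν * ν ^ (-(1/2+γ)) := by
          rw [show ν ^ (ν + 1/2) * ν * ν ^ (-(1/2+γ))
              = ν ^ (ν + 1/2) * ν ^ (1:ℝ) * ν ^ (-(1/2+γ)) by rw [Real.rpow_one],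
            ← Real.rpow_add hν0, ← Real.rpow_add hν0]
          congr 1
          ring
        have hR : (Real.exp 1 / 4) ^ ν = Real.exp ν / ((2:ℝ)^ν * (2:ℝ)^ν) := by
          rw [Real.div_rpow (Real.exp_pos 1).le (by norm_num : (0:ℝ) ≤ 4),
            Real.exp_one_rpow, show (4:ℝ) = 2*2 by norm_num,
            Real.mul_rpow two_pos.le two_pos.le]
        rw [hA, hR, Real.exp_neg]
        have h1 : ν ^ (ν + 1/2) ≠ 0 := (Real.rpow_pos_of_pos hν0 _).ne'
        have h2 : Real.exp ν ≠ 0 := (Real.exp_pos ν).ne'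
        have h3 : (2:ℝ)^ν ≠ 0 := h2ν.ne'
        field_simp
end

section
/- Let f(u) = √(q² − u^{-2}) − √(1 − u^{-2}) for u > 1, where q > 1 is fixed. Then on (1, ∞), f is decreasing (f' ≤ 0), convex (f'' ≥ 0), and f''' ≤ 0. -/
lemma aux_pos {a u : ℝ} (ha : 1 ≤ a) (hu : 1 < u) : 0 < a - u⁻¹ ^ 2 := by
  have hu0 : 0 < u := lt_trans one_pos hu
  have h1 : u⁻¹ < 1 := by
    rw [inv_lt_one₀ hu0]; exact hu
  have h2 : 0 < u⁻¹ := inv_pos.mpr hu0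
  nlinarith

lemma aux_d0 {a u : ℝ} (hu0 : u ≠ 0) (hpos : 0 < a - u⁻¹ ^ 2) :
    HasDerivAt (fun v : ℝ => Real.sqrt (a - v⁻¹ ^ 2)) (u⁻¹ ^ 3 / Real.sqrt (a - u⁻¹ ^ 2)) u := by
  have hinner : HasDerivAt (fun v : ℝ => a - v⁻¹ ^ 2) (2 * u⁻¹ ^ 3) u := by
    have h := ((hasDerivAt_inv hu0).pow 2).const_sub a
    refine h.congr_deriv ?_
    field_simp
    ring_nf
    simp [hu0]
  have h := hinner.sqrt (ne_of_gt hpos)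
  refine h.congr_deriv ?_
  rw [mul_div_mul_left _ _ (two_ne_zero)]

lemma aux_d1 {a u : ℝ} (hu0 : u ≠ 0) (hpos : 0 < a - u⁻¹ ^ 2) :
    HasDerivAt (fun v : ℝ => v⁻¹ ^ 3 / Real.sqrt (a - v⁻¹ ^ 2))
      (-(3 * u⁻¹ ^ 4 / Real.sqrt (a - u⁻¹ ^ 2)
        + u⁻¹ ^ 6 / (Real.sqrt (a - u⁻¹ ^ 2)) ^ 3)) u := by
  set s := Real.sqrt (a - u⁻¹ ^ 2) with hs
  have hs0 : s ≠ 0 := ne_of_gt (Real.sqrt_pos.mpr hpos)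
  have hnum : HasDerivAt (fun v : ℝ => v⁻¹ ^ 3) (-(3 * u⁻¹ ^ 4)) u := by
    have h := (hasDerivAt_inv hu0).pow 3
    refine h.congr_deriv ?_
    field_simp
    ring_nf
    simp [hu0]
  have h := hnum.div (aux_d0 hu0 hpos) hs0
  refine h.congr_deriv ?_
  rw [← hs]
  field_simp
  ring

lemma aux_d2 {a u : ℝ} (hu0 : u ≠ 0) (hpos : 0 < a - u⁻¹ ^ 2) :
    HasDerivAt (fun v : ℝ => 3 * v⁻¹ ^ 4 / Real.sqrt (a - v⁻¹ ^ 2)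
        + v⁻¹ ^ 6 / (Real.sqrt (a - v⁻¹ ^ 2)) ^ 3)
      (-(12 * u⁻¹ ^ 5 / Real.sqrt (a - u⁻¹ ^ 2)
        + 9 * u⁻¹ ^ 7 / (Real.sqrt (a - u⁻¹ ^ 2)) ^ 3
        + 3 * u⁻¹ ^ 9 / (Real.sqrt (a - u⁻¹ ^ 2)) ^ 5)) u := by
  set s := Real.sqrt (a - u⁻¹ ^ 2) with hs
  have hs0 : s ≠ 0 := ne_of_gt (Real.sqrt_pos.mpr hpos)
  have hnum1 : HasDerivAt (fun v : ℝ => 3 * v⁻¹ ^ 4) (-(12 * u⁻¹ ^ 5)) u := by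
    have h := ((hasDerivAt_inv hu0).pow 4).const_mul (3 : ℝ)
    refine h.congr_deriv ?_
    field_simp
    ring_nf
    simp [hu0]
  have hnum2 : HasDerivAt (fun v : ℝ => v⁻¹ ^ 6) (-(6 * u⁻¹ ^ 7)) u := by
    have h := (hasDerivAt_inv hu0).pow 6
    refine h.congr_deriv ?_
    field_simp
    ring_nf
    simp [hu0]
  have hden2 : HasDerivAt (fun v : ℝ => (Real.sqrt (a - v⁻¹ ^ 2)) ^ 3)
      (3 * s ^ 2 * (u⁻¹ ^ 3 / s)) u := by
    have h := (aux_d0 hu0 hpos).pow 3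
    refine h.congr_deriv ?_
    rw [← hs]
    norm_num
  have h1 := hnum1.div (aux_d0 hu0 hpos) hs0
  have h2 := hnum2.div hden2 (pow_ne_zero 3 hs0)
  have h := h1.add h2
  refine h.congr_deriv ?_
  rw [← hs]
  field_simp
  ring

/-- Monotonicity and convexity properties of `f(u) = √(q² − u⁻²) − √(1 − u⁻²)`. -/
theorem f_deriv_signs (q : ℝ) (hq : 1 < q) :
    ∀ u : ℝ, 1 < u →
      deriv (fun v : ℝ => Real.sqrt (q ^ 2 - v⁻¹ ^ 2) - Real.sqrt (1 - v⁻¹ ^ 2)) u ≤ 0 ∧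
      0 ≤ deriv (deriv (fun v : ℝ => Real.sqrt (q ^ 2 - v⁻¹ ^ 2) - Real.sqrt (1 - v⁻¹ ^ 2))) u ∧
      deriv (deriv (deriv (fun v : ℝ =>
        Real.sqrt (q ^ 2 - v⁻¹ ^ 2) - Real.sqrt (1 - v⁻¹ ^ 2)))) u ≤ 0 := by
  have hq2 : (1 : ℝ) ≤ q ^ 2 := by nlinarith
  set F0 : ℝ → ℝ := fun v => Real.sqrt (q ^ 2 - v⁻¹ ^ 2) - Real.sqrt (1 - v⁻¹ ^ 2) with hF0
  set F1 : ℝ → ℝ := fun v =>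
    v⁻¹ ^ 3 / Real.sqrt (q ^ 2 - v⁻¹ ^ 2) - v⁻¹ ^ 3 / Real.sqrt (1 - v⁻¹ ^ 2) with hF1
  set F2 : ℝ → ℝ := fun v =>
    (3 * v⁻¹ ^ 4 / Real.sqrt (1 - v⁻¹ ^ 2) + v⁻¹ ^ 6 / (Real.sqrt (1 - v⁻¹ ^ 2)) ^ 3)
      - (3 * v⁻¹ ^ 4 / Real.sqrt (q ^ 2 - v⁻¹ ^ 2)
        + v⁻¹ ^ 6 / (Real.sqrt (q ^ 2 - v⁻¹ ^ 2)) ^ 3) with hF2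
  set F3 : ℝ → ℝ := fun v =>
    (12 * v⁻¹ ^ 5 / Real.sqrt (q ^ 2 - v⁻¹ ^ 2)
      + 9 * v⁻¹ ^ 7 / (Real.sqrt (q ^ 2 - v⁻¹ ^ 2)) ^ 3
      + 3 * v⁻¹ ^ 9 / (Real.sqrt (q ^ 2 - v⁻¹ ^ 2)) ^ 5)
    - (12 * v⁻¹ ^ 5 / Real.sqrt (1 - v⁻¹ ^ 2)
      + 9 * v⁻¹ ^ 7 / (Real.sqrt (1 - v⁻¹ ^ 2)) ^ 3
      + 3 * v⁻¹ ^ 9 / (Real.sqrt (1 - v⁻¹ ^ 2)) ^ 5) with hF3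
  have hD0 : ∀ v : ℝ, 1 < v → HasDerivAt F0 (F1 v) v := by
    intro v hv
    have hv0 : v ≠ 0 := ne_of_gt (lt_trans one_pos hv)
    exact (aux_d0 hv0 (aux_pos hq2 hv)).sub (aux_d0 hv0 (aux_pos le_rfl hv))
  have hD1 : ∀ v : ℝ, 1 < v → HasDerivAt F1 (F2 v) v := by
    intro v hv
    have hv0 : v ≠ 0 := ne_of_gt (lt_trans one_pos hv)
    have h := (aux_d1 hv0 (aux_pos hq2 hv)).sub (aux_d1 hv0 (aux_pos le_rfl hv))
    refine h.congr_deriv ?_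
    simp only [hF2]
    ring
  have hD2 : ∀ v : ℝ, 1 < v → HasDerivAt F2 (F3 v) v := by
    intro v hv
    have hv0 : v ≠ 0 := ne_of_gt (lt_trans one_pos hv)
    have h := (aux_d2 hv0 (aux_pos le_rfl hv)).sub (aux_d2 hv0 (aux_pos hq2 hv))
    refine h.congr_deriv ?_
    simp only [hF3]
    ring
  intro u hu
  have hu0 : (0 : ℝ) < u := lt_trans one_pos hu
  have hmem : Set.Ioi (1 : ℝ) ∈ nhds u := isOpen_Ioi.mem_nhds hu
  have e0 : deriv F0 =ᶠ[nhds u] F1 := by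
    filter_upwards [hmem] with v hv
    exact (hD0 v hv).deriv
  have e1 : deriv F1 =ᶠ[nhds u] F2 := by
    filter_upwards [hmem] with v hv
    exact (hD1 v hv).deriv
  -- sign facts
  set Sq := Real.sqrt (q ^ 2 - u⁻¹ ^ 2) with hSq
  set S1 := Real.sqrt (1 - u⁻¹ ^ 2) with hS1
  have hS1pos : 0 < S1 := Real.sqrt_pos.mpr (aux_pos le_rfl hu)
  have hle : S1 ≤ Sq := Real.sqrt_le_sqrt (by nlinarith)
  have huinv : (0 : ℝ) ≤ u⁻¹ := by positivity
  refine ⟨?_, ?_, ?_⟩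
  · rw [(hD0 u hu).deriv]
    simp only [hF1]
    rw [sub_nonpos]
    gcongr
  · rw [e0.deriv_eq, (hD1 u hu).deriv]
    simp only [hF2]
    rw [sub_nonneg]
    gcongr
  · have e0' : deriv (deriv F0) =ᶠ[nhds u] F2 := e0.deriv.trans e1
    rw [e0'.deriv_eq, (hD2 u hu).deriv]
    simp only [hF3]
    rw [sub_nonpos]
    gcongr
end

section
/- Let q = 1 + ν^{-η} and u₀ = 1 + ν^{-γ} with ν ≥ 2, η > 0, γ ∈ [0, 1/3], and set ξ = min(η, γ). With f(u) = √(q² − u^{-2}) − √(1 − u^{-2}), there is a universal constant C > 0 such that −f'(u₀) ≥ C ν^{γ/2 + ξ − η}. -/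
open Real

set_option maxHeartbeats 1000000 in
lemma key_ineq (a b : ℝ) (ha : 0 < a) (ha1 : a ≤ 1) (hb : 0 < b) (hb1 : b ≤ 1) :
    -deriv (fun v : ℝ => Real.sqrt ((1 + b) ^ 2 - v⁻¹ ^ 2) - Real.sqrt (1 - v⁻¹ ^ 2)) (1 + a)
      ≥ (1/120) * (b / (Real.sqrt a * max a b)) := by
  set u : ℝ := 1 + a with hudef
  have hu1 : 1 < u := by simp [hudef]; linarith
  have hu0 : 0 < u := by linarith
  have hu2 : u ≤ 2 := by simp [hudef]; linarith
  have huinv : u * u⁻¹ = 1 := mul_inv_cancel₀ (ne_of_gt hu0)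
  have hA2pos : 0 < 1 - u⁻¹ ^ 2 := by
    have h1 : u⁻¹ < 1 := by
      rw [inv_lt_one_iff₀]; right; exact hu1
    have h2 : 0 < u⁻¹ := inv_pos.mpr hu0
    nlinarith
  have hB2pos : 0 < (1 + b) ^ 2 - u⁻¹ ^ 2 := by nlinarith
  set A : ℝ := Real.sqrt (1 - u⁻¹ ^ 2) with hAdef
  set B : ℝ := Real.sqrt ((1 + b) ^ 2 - u⁻¹ ^ 2) with hBdef
  have hA : 0 < A := Real.sqrt_pos.mpr hA2pos
  have hB : 0 < B := Real.sqrt_pos.mpr hB2pos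
  have hAsq : A ^ 2 = 1 - u⁻¹ ^ 2 := Real.sq_sqrt hA2pos.le
  have hBsq : B ^ 2 = (1 + b) ^ 2 - u⁻¹ ^ 2 := Real.sq_sqrt hB2pos.le
  -- derivative computation
  have hd1 : HasDerivAt (fun v : ℝ => (1 + b) ^ 2 - v⁻¹ ^ 2) (2 * u⁻¹ ^ 3) u := by
    have h := (((hasDerivAt_inv (ne_of_gt hu0)).pow 2).const_sub ((1 + b) ^ 2))
    refine h.congr_deriv ?_
    norm_num
    field_simp
  have hd2 : HasDerivAt (fun v : ℝ => 1 - v⁻¹ ^ 2) (2 * u⁻¹ ^ 3) u := by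
    have h := (((hasDerivAt_inv (ne_of_gt hu0)).pow 2).const_sub 1)
    refine h.congr_deriv ?_
    norm_num
    field_simp
  have hD : HasDerivAt
      (fun v : ℝ => Real.sqrt ((1 + b) ^ 2 - v⁻¹ ^ 2) - Real.sqrt (1 - v⁻¹ ^ 2))
      ((2 * u⁻¹ ^ 3) / (2 * B) - (2 * u⁻¹ ^ 3) / (2 * A)) u :=
    (hd1.sqrt (ne_of_gt hB2pos)).sub (hd2.sqrt (ne_of_gt hA2pos))
  rw [hD.deriv]
  -- now the inequality
  set m : ℝ := max a b with hmdef
  have hm : 0 < m := lt_max_of_lt_left ha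
  have hsa : 0 < Real.sqrt a := Real.sqrt_pos.mpr ha
  have hsm : 0 < Real.sqrt m := Real.sqrt_pos.mpr hm
  have hsam : Real.sqrt a ≤ Real.sqrt m := Real.sqrt_le_sqrt (le_max_left a b)
  have hmm : Real.sqrt m * Real.sqrt m = m := Real.mul_self_sqrt hm.le
  -- bound: 1 - u⁻² ≤ 4a
  have htu : u⁻¹ ^ 2 * u ^ 2 = 1 := by field_simp
  have hAub : 1 - u⁻¹ ^ 2 ≤ 4 * a := by
    nlinarith [htu, sq_nonneg u⁻¹, mul_pos ha ha, mul_pos (mul_pos ha ha) ha,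
      mul_pos (pow_pos (inv_pos.mpr hu0) 2) ha]
  have hAle : A ≤ 2 * Real.sqrt a := by
    have h4 : Real.sqrt (4 * a) = 2 * Real.sqrt a := by
      rw [show (4 : ℝ) * a = 2 ^ 2 * a by ring, Real.sqrt_mul (by positivity),
        Real.sqrt_sq (by norm_num)]
    calc A ≤ Real.sqrt (4 * a) := Real.sqrt_le_sqrt hAub
      _ = 2 * Real.sqrt a := h4
  have hBle : B ≤ 3 * Real.sqrt m := by
    have h9 : Real.sqrt (9 * m) = 3 * Real.sqrt m := by
      rw [show (9 : ℝ) * m = 3 ^ 2 * m by ring, Real.sqrt_mul (by positivity),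
        Real.sqrt_sq (by norm_num)]
    have hub : (1 + b) ^ 2 - u⁻¹ ^ 2 ≤ 9 * m := by
      have h1 : a ≤ m := le_max_left a b
      have h2 : b ≤ m := le_max_right a b
      nlinarith
    calc B ≤ Real.sqrt (9 * m) := Real.sqrt_le_sqrt hub
      _ = 3 * Real.sqrt m := h9
  have hAle' : A ≤ 2 * Real.sqrt m := le_trans hAle (by linarith)
  have hnum : 2 * b ≤ B ^ 2 - A ^ 2 := by rw [hAsq, hBsq]; nlinarith
  have hprod : A * B * (A + B) ≤ 30 * Real.sqrt a * m := by
    have h1 : A * B * (A + B) ≤ (2 * Real.sqrt a) * (3 * Real.sqrt m) * (2 * Real.sqrt m + 3 * Real.sqrt m) := by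
      gcongr <;> first | positivity | linarith
    calc A * B * (A + B) ≤ (2 * Real.sqrt a) * (3 * Real.sqrt m) * (2 * Real.sqrt m + 3 * Real.sqrt m) := h1
      _ = 30 * Real.sqrt a * (Real.sqrt m * Real.sqrt m) := by ring
      _ = 30 * Real.sqrt a * m := by rw [hmm]
  have hid : 1 / A - 1 / B = (B ^ 2 - A ^ 2) / (A * B * (A + B)) := by
    field_simp
    ring
  have hfrac : 2 * b / (30 * Real.sqrt a * m) ≤ 1 / A - 1 / B := by
    rw [hid]
    apply div_le_div₀ (by nlinarith) hnum (by positivity) hprod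
  have hu3 : (1 : ℝ) / 8 ≤ u⁻¹ ^ 3 := by
    rw [show u⁻¹ ^ 3 = 1 / u ^ 3 by field_simp]
    rw [div_le_div_iff₀ (by norm_num) (by positivity)]
    nlinarith [pow_le_pow_left₀ hu0.le hu2 3]
  have hABpos : 0 ≤ 1 / A - 1 / B := le_trans (by positivity) hfrac
  have hmain : u⁻¹ ^ 3 * (1 / A - 1 / B) ≥ (1/120) * (b / (Real.sqrt a * m)) := by
    calc u⁻¹ ^ 3 * (1 / A - 1 / B) ≥ (1/8) * (2 * b / (30 * Real.sqrt a * m)) := by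
          apply mul_le_mul hu3 hfrac (by positivity) (by positivity)
      _ = (1/120) * (b / (Real.sqrt a * m)) := by
          field_simp
          ring
  calc -(2 * u⁻¹ ^ 3 / (2 * B) - 2 * u⁻¹ ^ 3 / (2 * A))
      = u⁻¹ ^ 3 * (1 / A - 1 / B) := by field_simp; ring
    _ ≥ (1/120) * (b / (Real.sqrt a * m)) := hmain

theorem neg_f_deriv_lower_bound :
    ∃ C > 0, ∀ (ν η γ : ℝ), 2 ≤ ν → 0 < η → γ ∈ Set.Icc (0 : ℝ) (1 / 3) →
      -deriv (fun v : ℝ =>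
          Real.sqrt ((1 + ν ^ (-η)) ^ 2 - v⁻¹ ^ 2) - Real.sqrt (1 - v⁻¹ ^ 2))
        (1 + ν ^ (-γ)) ≥
      C * ν ^ (γ / 2 + min η γ - η) := by
  refine ⟨1/120, by norm_num, fun ν η γ hν hη hγ => ?_⟩
  obtain ⟨hγ0, hγ1⟩ := hγ
  have hν0 : (0:ℝ) < ν := by linarith
  have hν1 : (1:ℝ) < ν := by linarith
  set a := ν ^ (-γ) with hadef
  set b := ν ^ (-η) with hbdef
  have ha : 0 < a := Real.rpow_pos_of_pos hν0 _
  have hb : 0 < b := Real.rpow_pos_of_pos hν0 _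
  have ha1 : a ≤ 1 := Real.rpow_le_one_of_one_le_of_nonpos hν1.le (by linarith)
  have hb1 : b ≤ 1 := Real.rpow_le_one_of_one_le_of_nonpos hν1.le (by linarith)
  have hkey := key_ineq a b ha ha1 hb hb1
  have hmono : Monotone (fun x : ℝ => ν ^ x) :=
    fun x y h => Real.rpow_le_rpow_of_exponent_le hν1.le h
  have hmax : max a b = ν ^ (-(min γ η)) := by
    rw [hadef, hbdef, ← hmono.map_max, max_neg_neg]
  have hsqrt : Real.sqrt a = ν ^ (-γ / 2) := by
    rw [hadef, Real.sqrt_eq_rpow, ← Real.rpow_mul hν0.le]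
    congr 1
    ring
  have hrhs : b / (Real.sqrt a * max a b) = ν ^ (γ / 2 + min η γ - η) := by
    rw [hsqrt, hmax, hbdef, ← Real.rpow_add hν0, ← Real.rpow_sub hν0]
    congr 1
    rw [min_comm η γ]
    ring
  rw [hrhs] at hkey
  exact hkey
end

section
/- Let q = 1 + ν^{-η} and u₀ = 1 + ν^{-γ} with ν ≥ 2, η > 0, γ ∈ [0, 1/3], ξ = min(η,γ), and f(u) = √(q² − u^{-2}) − √(1 − u^{-2}). Then there is a universal constant C such that |f''(u₀)| ≤ C ν^{3γ/2 + ξ − η}. -/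
set_option maxHeartbeats 2000000
open Real

private lemma numer_bound (x y a b : ℝ) (hx : 0 < x) (hx1 : x ≤ 1)
    (hy : 0 < y) (hy1 : y ≤ 1) (hb : 0 < b) (hab : b ≤ a)
    (hb2 : x / 2 ≤ b ^ 2) (ha2 : max x y / 2 ≤ a ^ 2)
    (hd : a ^ 2 - b ^ 2 ≤ 3 * y) :
    3 * (1 / b - 1 / a) + (1 / b ^ 3 - 1 / a ^ 3) ≤
      144 * (y / (x * Real.sqrt x * max x y)) := by
  set M := max x y with hM
  have hM0 : 0 < M := lt_max_of_lt_left hx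
  have ha : 0 < a := lt_of_lt_of_le hb hab
  set s := Real.sqrt x with hs
  have hs0 : 0 < s := Real.sqrt_pos.mpr hx
  have hs2 : s ^ 2 = x := Real.sq_sqrt hx.le
  have hs1 : s ≤ 1 := by rw [hs]; exact Real.sqrt_le_one.mpr hx1
  have hbs : s / 2 ≤ b := by nlinarith
  have hMle1 : M ≤ 1 := max_le hx1 hy1
  have haM : M / 2 ≤ a := by nlinarith
  have e1 : M / 2 * (x / 2) ≤ a * b ^ 2 :=
    mul_le_mul haM hb2 (by positivity) ha.le
  have hden1 : M * x * s / 8 ≤ a * b ^ 2 := by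
    nlinarith [mul_nonneg (mul_nonneg hM0.le hx.le) (sub_nonneg.2 hs1)]
  have eb3 : x / 2 * (s / 2) ≤ b ^ 2 * b :=
    mul_le_mul hb2 hbs (by positivity) (by positivity)
  have hden2 : M * x * s / 8 ≤ a ^ 2 * b ^ 3 := by
    nlinarith [mul_le_mul ha2 eb3 (by positivity) (by positivity : (0:ℝ) ≤ a ^ 2)]
  have hden0 : 0 < M * x * s / 8 := by positivity
  have hab1 : (a - b) * b ≤ 3 * y := by nlinarith
  have hab2 : (a - b) * a ≤ 3 * y := by nlinarith
  have h1 : 1 / b - 1 / a ≤ 3 * y / (a * b ^ 2) := by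
    rw [div_sub_div _ _ hb.ne' ha.ne', div_le_div_iff₀ (by positivity) (by positivity)]
    have p := mul_le_mul_of_nonneg_right hab1 (mul_pos ha hb).le
    nlinarith [p]
  have hcube : a ^ 3 - b ^ 3 ≤ 9 * y * a := by
    have p1 : 3 * a * ((a - b) * a) ≤ 3 * a * (3 * y) :=
      mul_le_mul_of_nonneg_left hab2 (by positivity)
    have p2 : (0:ℝ) ≤ (a - b) ^ 2 * (2 * a + b) := by positivity
    nlinarith [p1, p2]
  have h2 : 1 / b ^ 3 - 1 / a ^ 3 ≤ 9 * y / (a ^ 2 * b ^ 3) := by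
    rw [div_sub_div _ _ (by positivity : b ^ 3 ≠ 0) (by positivity : a ^ 3 ≠ 0),
      div_le_div_iff₀ (by positivity) (by positivity)]
    have p := mul_le_mul_of_nonneg_right hcube (by positivity : (0:ℝ) ≤ a ^ 2 * b ^ 3)
    nlinarith [p]
  have h1' : 3 * y / (a * b ^ 2) ≤ 3 * y / (M * x * s / 8) :=
    div_le_div_of_nonneg_left (by positivity) hden0 hden1
  have h2' : 9 * y / (a ^ 2 * b ^ 3) ≤ 9 * y / (M * x * s / 8) :=
    div_le_div_of_nonneg_left (by positivity) hden0 hden2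
  have hfin : 3 * y / (M * x * s / 8) * 3 + 9 * y / (M * x * s / 8) =
      144 * (y / (x * s * M)) := by
    field_simp
    ring
  linarith

theorem f_second_deriv_upper_bound :
    ∃ C > 0, ∀ (ν η γ : ℝ), 2 ≤ ν → 0 < η → γ ∈ Set.Icc (0 : ℝ) (1 / 3) →
      |deriv (deriv (fun v : ℝ =>
          Real.sqrt ((1 + ν ^ (-η)) ^ 2 - v⁻¹ ^ 2) - Real.sqrt (1 - v⁻¹ ^ 2)))
        (1 + ν ^ (-γ))| ≤
      C * ν ^ (3 * γ / 2 + min η γ - η) := by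
  refine ⟨1000, by norm_num, ?_⟩
  intro ν η γ hν hη hγ
  obtain ⟨hγ0, hγ13⟩ := hγ
  have hν0 : (0:ℝ) < ν := by linarith
  have hν1 : (1:ℝ) ≤ ν := by linarith
  set y := ν ^ (-η) with hy_def
  set x := ν ^ (-γ) with hx_def
  have hx : 0 < x := Real.rpow_pos_of_pos hν0 _
  have hy : 0 < y := Real.rpow_pos_of_pos hν0 _
  have hx1 : x ≤ 1 := Real.rpow_le_one_of_one_le_of_nonpos hν1 (by linarith)
  have hy1 : y ≤ 1 := Real.rpow_le_one_of_one_le_of_nonpos hν1 (by linarith)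
  set q := 1 + y with hq_def
  set u := 1 + x with hu_def
  have hq1 : (1:ℝ) ≤ q := by simp [hq_def]; linarith
  have hu : (1:ℝ) < u := by simp [hu_def]; linarith
  -- first derivative, on Ioi 1
  have hfd : ∀ v ∈ Set.Ioi (1:ℝ),
      HasDerivAt (fun v : ℝ => Real.sqrt (q ^ 2 - v⁻¹ ^ 2) - Real.sqrt (1 - v⁻¹ ^ 2))
        (v⁻¹ ^ 3 / Real.sqrt (q ^ 2 - v⁻¹ ^ 2) - v⁻¹ ^ 3 / Real.sqrt (1 - v⁻¹ ^ 2)) v := by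
    intro v hv
    have hv1 : 1 < v := hv
    have hv0 : v ≠ 0 := by positivity
    have hvi : v⁻¹ < 1 := inv_lt_one_of_one_lt₀ hv1
    have hvi0 : 0 < v⁻¹ := by positivity
    have hB : 0 < 1 - v⁻¹ ^ 2 := by nlinarith
    have hA : 0 < q ^ 2 - v⁻¹ ^ 2 := by nlinarith
    have hsA : Real.sqrt (q ^ 2 - v⁻¹ ^ 2) ≠ 0 := by positivity
    have hsB : Real.sqrt (1 - v⁻¹ ^ 2) ≠ 0 := by positivity
    have h1 : HasDerivAt (fun w : ℝ => w⁻¹ ^ 2) (2 * v⁻¹ ^ 1 * -(v ^ 2)⁻¹) v := by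
      exact (hasDerivAt_inv hv0).pow 2
    have hdA : HasDerivAt (fun w : ℝ => Real.sqrt (q ^ 2 - w⁻¹ ^ 2))
        (-(2 * v⁻¹ ^ 1 * -(v ^ 2)⁻¹) / (2 * Real.sqrt (q ^ 2 - v⁻¹ ^ 2))) v :=
      (h1.const_sub _).sqrt hA.ne'
    have hdB : HasDerivAt (fun w : ℝ => Real.sqrt (1 - w⁻¹ ^ 2))
        (-(2 * v⁻¹ ^ 1 * -(v ^ 2)⁻¹) / (2 * Real.sqrt (1 - v⁻¹ ^ 2))) v :=
      (h1.const_sub _).sqrt hB.ne'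
    refine (hdA.fun_sub hdB).congr_deriv ?_
    field_simp
  -- replace deriv f by the explicit formula near u
  have hev : deriv (fun v : ℝ => Real.sqrt (q ^ 2 - v⁻¹ ^ 2) - Real.sqrt (1 - v⁻¹ ^ 2))
      =ᶠ[nhds u]
      (fun v : ℝ => v⁻¹ ^ 3 / Real.sqrt (q ^ 2 - v⁻¹ ^ 2) - v⁻¹ ^ 3 / Real.sqrt (1 - v⁻¹ ^ 2)) :=
    Filter.eventuallyEq_of_mem (isOpen_Ioi.mem_nhds hu) fun v hv => (hfd v hv).deriv
  rw [hev.deriv_eq]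
  -- basic facts at u
  have hu0 : u ≠ 0 := by positivity
  have hui : u⁻¹ < 1 := inv_lt_one_of_one_lt₀ hu
  have hui0 : 0 < u⁻¹ := by positivity
  have hB : 0 < 1 - u⁻¹ ^ 2 := by nlinarith
  have hA : 0 < q ^ 2 - u⁻¹ ^ 2 := by nlinarith
  have hsA : (0:ℝ) < Real.sqrt (q ^ 2 - u⁻¹ ^ 2) := Real.sqrt_pos.mpr hA
  have hsB : (0:ℝ) < Real.sqrt (1 - u⁻¹ ^ 2) := Real.sqrt_pos.mpr hB
  -- second derivative at u
  have hderiv2 : deriv (fun v : ℝ =>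
        v⁻¹ ^ 3 / Real.sqrt (q ^ 2 - v⁻¹ ^ 2) - v⁻¹ ^ 3 / Real.sqrt (1 - v⁻¹ ^ 2)) u
      = 3 * u⁻¹ ^ 4 * (1 / Real.sqrt (1 - u⁻¹ ^ 2) - 1 / Real.sqrt (q ^ 2 - u⁻¹ ^ 2))
        + u⁻¹ ^ 6 * (1 / Real.sqrt (1 - u⁻¹ ^ 2) ^ 3 - 1 / Real.sqrt (q ^ 2 - u⁻¹ ^ 2) ^ 3) := by
    have h1 : HasDerivAt (fun w : ℝ => w⁻¹ ^ 2) (2 * u⁻¹ ^ 1 * -(u ^ 2)⁻¹) u :=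
      (hasDerivAt_inv hu0).pow 2
    have h3 : HasDerivAt (fun w : ℝ => w⁻¹ ^ 3) (3 * u⁻¹ ^ 2 * -(u ^ 2)⁻¹) u :=
      (hasDerivAt_inv hu0).pow 3
    have hdA : HasDerivAt (fun w : ℝ => Real.sqrt (q ^ 2 - w⁻¹ ^ 2))
        (-(2 * u⁻¹ ^ 1 * -(u ^ 2)⁻¹) / (2 * Real.sqrt (q ^ 2 - u⁻¹ ^ 2))) u :=
      (h1.const_sub _).sqrt hA.ne'
    have hdB : HasDerivAt (fun w : ℝ => Real.sqrt (1 - w⁻¹ ^ 2))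
        (-(2 * u⁻¹ ^ 1 * -(u ^ 2)⁻¹) / (2 * Real.sqrt (1 - u⁻¹ ^ 2))) u :=
      (h1.const_sub _).sqrt hB.ne'
    have hD := (h3.fun_div hdA hsA.ne').fun_sub (h3.fun_div hdB hsB.ne')
    rw [hD.deriv]
    set a := Real.sqrt (q ^ 2 - u⁻¹ ^ 2) with ha
    set b := Real.sqrt (1 - u⁻¹ ^ 2) with hb
    rw [inv_eq_one_div u]
    field_simp
    ring
  rw [hderiv2]
  set a := Real.sqrt (q ^ 2 - u⁻¹ ^ 2) with ha_def
  set b := Real.sqrt (1 - u⁻¹ ^ 2) with hb_def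
  have ha2eq : a ^ 2 = q ^ 2 - u⁻¹ ^ 2 := Real.sq_sqrt hA.le
  have hb2eq : b ^ 2 = 1 - u⁻¹ ^ 2 := Real.sq_sqrt hB.le
  have hab : b ≤ a := Real.sqrt_le_sqrt (by nlinarith)
  -- key inequalities for numer_bound
  have hinv2 : u⁻¹ ^ 2 = ((1 + x) ^ 2)⁻¹ := by rw [hu_def, inv_pow]
  have hc : ((1 + x) ^ 2)⁻¹ * (1 + x) ^ 2 = 1 := inv_mul_cancel₀ (by positivity)
  have hb2 : x / 2 ≤ b ^ 2 := by
    rw [hb2eq, hinv2]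
    nlinarith [hc, sq_nonneg x, sq_nonneg (1 + x)]
  have hdiff : a ^ 2 - b ^ 2 = 2 * y + y ^ 2 := by
    rw [ha2eq, hb2eq, hq_def]; ring
  have hd3 : a ^ 2 - b ^ 2 ≤ 3 * y := by nlinarith
  have ha2 : max x y / 2 ≤ a ^ 2 := by
    have h1 : x ≤ 2 * a ^ 2 := by nlinarith
    have h2 : y ≤ 2 * a ^ 2 := by nlinarith
    have := max_le h1 h2
    linarith
  -- nonnegativity of differences
  have hd1 : 0 ≤ 1 / b - 1 / a := by
    rw [sub_nonneg]
    exact one_div_le_one_div_of_le hsB hab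
  have hd2 : 0 ≤ 1 / b ^ 3 - 1 / a ^ 3 := by
    rw [sub_nonneg]
    exact one_div_le_one_div_of_le (by positivity) (pow_le_pow_left₀ hsB.le hab 3)
  have hE0 : 0 ≤ 3 * u⁻¹ ^ 4 * (1 / b - 1 / a) + u⁻¹ ^ 6 * (1 / b ^ 3 - 1 / a ^ 3) :=
    add_nonneg (mul_nonneg (by positivity) hd1) (mul_nonneg (by positivity) hd2)
  rw [abs_of_nonneg hE0]
  have ht1 : u⁻¹ ^ 4 ≤ 1 := pow_le_one₀ hui0.le hui.le
  have ht2 : u⁻¹ ^ 6 ≤ 1 := pow_le_one₀ hui0.le hui.le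
  have hle1 : 3 * u⁻¹ ^ 4 * (1 / b - 1 / a) + u⁻¹ ^ 6 * (1 / b ^ 3 - 1 / a ^ 3)
      ≤ 3 * (1 / b - 1 / a) + (1 / b ^ 3 - 1 / a ^ 3) := by
    nlinarith [mul_le_of_le_one_left hd1 ht1, mul_le_of_le_one_left hd2 ht2]
  have hnb := numer_bound x y a b hx hx1 hy hy1 hsB hab hb2 ha2 hd3
  -- power arithmetic
  have hxs : x * Real.sqrt x = ν ^ (-(3 * γ / 2)) := by
    rw [hx_def, Real.sqrt_eq_rpow, ← Real.rpow_mul hν0.le, ← Real.rpow_add hν0]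
    congr 1
    ring
  have hMax : max x y = ν ^ (-(min η γ)) := by
    rcases le_total η γ with h | h
    · rw [min_eq_left h, max_eq_right
        (by rw [hx_def, hy_def]; exact Real.rpow_le_rpow_of_exponent_le hν1 (by linarith))]
    · rw [min_eq_right h, max_eq_left
        (by rw [hx_def, hy_def]; exact Real.rpow_le_rpow_of_exponent_le hν1 (by linarith))]
  have hkey : y / (x * Real.sqrt x * max x y) = ν ^ (3 * γ / 2 + min η γ - η) := by
    rw [hxs, hMax, hy_def, ← Real.rpow_add hν0, ← Real.rpow_sub hν0]
    congr 1
    ring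
  calc 3 * u⁻¹ ^ 4 * (1 / b - 1 / a) + u⁻¹ ^ 6 * (1 / b ^ 3 - 1 / a ^ 3)
      ≤ 3 * (1 / b - 1 / a) + (1 / b ^ 3 - 1 / a ^ 3) := hle1
    _ ≤ 144 * (y / (x * Real.sqrt x * max x y)) := hnb
    _ = 144 * ν ^ (3 * γ / 2 + min η γ - η) := by rw [hkey]
    _ ≤ 1000 * ν ^ (3 * γ / 2 + min η γ - η) :=
        mul_le_mul_of_nonneg_right (by norm_num)
          (Real.rpow_pos_of_pos hν0 (3 * γ / 2 + min η γ - η)).le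
end

section
/- Let σ ≥ 1, p > 0, γ ≥ 1, and define f(u) = (p+2)u / (√((p+1)²u² − σ²) + √(u² − σ²)) for u > σ, and a = f(σ + σ^γ)/(σ + σ^γ). Then for all u ≥ 2σ with u ≥ σ + σ^γ or u ≤ σ + σ^γ, one has |f(u) − a u| ≥ |σ + σ^γ − u| · a, and consequently the phase φ(u) = −(a/2)u² + θ((p+1)u/p) − θ(u/p) satisfies |φ'(u)| ≥ |σ + σ^γ − u|/(σ + σ^γ). -/
open Real


lemma sqA_pos' (σ p u : ℝ) (hσ : 0 < σ) (hp : 0 < p) (hu : σ < u) :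
    (0:ℝ) < (p + 1) ^ 2 * u ^ 2 - σ ^ 2 := by
  have hu0 : 0 < u := hσ.trans hu
  nlinarith [mul_pos (sub_pos.mpr hu) (by linarith : (0:ℝ) < u + σ),
    mul_nonneg (mul_nonneg hp.le hp.le) (sq_nonneg u), mul_nonneg hp.le (sq_nonneg u)]

lemma theta_deriv' (ν : ℝ) (hν : 0 < ν) {r : ℝ} (hr : ν < r) :
    HasDerivAt (fun r => Real.sqrt (r ^ 2 - ν ^ 2) - ν * Real.arccos (ν / r) - Real.pi / 4)
      (Real.sqrt (r ^ 2 - ν ^ 2) / r) r := by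
  have hr0 : 0 < r := hν.trans hr
  have hX : (0:ℝ) < r ^ 2 - ν ^ 2 := by nlinarith
  have hsX : 0 < Real.sqrt (r ^ 2 - ν ^ 2) := Real.sqrt_pos.mpr hX
  have h1 : HasDerivAt (fun r : ℝ => Real.sqrt (r ^ 2 - ν ^ 2))
      (1 / (2 * Real.sqrt (r ^ 2 - ν ^ 2)) * (2 * r)) r := by
    have hin : HasDerivAt (fun r : ℝ => r ^ 2 - ν ^ 2) (2 * r) r := by
      simpa using ((hasDerivAt_pow 2 r).sub_const (ν ^ 2))
    exact (Real.hasDerivAt_sqrt hX.ne').comp r hin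
  have hx1 : ν / r ≠ -1 := by
    have : 0 < ν / r := div_pos hν hr0; linarith
  have hx2 : ν / r ≠ 1 := by
    have : ν / r < 1 := (div_lt_one hr0).mpr hr; linarith
  have hin2 : HasDerivAt (fun r : ℝ => ν / r) (-(ν / r ^ 2)) r := by
    simpa [div_eq_mul_inv, mul_comm] using (hasDerivAt_inv hr0.ne').const_mul ν
  have h2 : HasDerivAt (fun r : ℝ => ν * Real.arccos (ν / r))
      (ν * (-(1 / Real.sqrt (1 - (ν / r) ^ 2)) * (-(ν / r ^ 2)))) r :=
    (((Real.hasDerivAt_arccos hx1 hx2).comp r hin2)).const_mul ν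
  have h := (h1.sub h2).sub_const (Real.pi / 4)
  refine h.congr_deriv (Eq.symm ?_)
  have hs : Real.sqrt (1 - (ν / r) ^ 2) = Real.sqrt (r ^ 2 - ν ^ 2) / r := by
    rw [show 1 - (ν / r) ^ 2 = (r ^ 2 - ν ^ 2) / r ^ 2 by field_simp,
      Real.sqrt_div hX.le, Real.sqrt_sq hr0.le]
  rw [hs]
  have h2X : Real.sqrt (r ^ 2 - ν ^ 2) ^ 2 = r ^ 2 - ν ^ 2 := Real.sq_sqrt hX.le
  field_simp
  linear_combination h2X

lemma f_anti_aux (σ p : ℝ) (hσ : 0 < σ) (hp : 0 < p) {u v : ℝ} (hu : σ < u) (huv : u ≤ v) :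
    (p + 2) * v / (Real.sqrt ((p + 1) ^ 2 * v ^ 2 - σ ^ 2) + Real.sqrt (v ^ 2 - σ ^ 2)) ≤
    (p + 2) * u / (Real.sqrt ((p + 1) ^ 2 * u ^ 2 - σ ^ 2) + Real.sqrt (u ^ 2 - σ ^ 2)) := by
  have hu0 : 0 < u := hσ.trans hu
  have hv0 : 0 < v := hu0.trans_le huv
  have hAu := sqA_pos' σ p u hσ hp hu
  have hAv := sqA_pos' σ p v hσ hp (hu.trans_le huv)
  have hDu : 0 < Real.sqrt ((p + 1) ^ 2 * u ^ 2 - σ ^ 2) + Real.sqrt (u ^ 2 - σ ^ 2) :=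
    add_pos_of_pos_of_nonneg (Real.sqrt_pos.mpr hAu) (Real.sqrt_nonneg _)
  have hDv : 0 < Real.sqrt ((p + 1) ^ 2 * v ^ 2 - σ ^ 2) + Real.sqrt (v ^ 2 - σ ^ 2) :=
    add_pos_of_pos_of_nonneg (Real.sqrt_pos.mpr hAv) (Real.sqrt_nonneg _)
  rw [div_le_div_iff₀ hDv hDu]
  have key : ∀ c : ℝ, 1 ≤ c →
      v * Real.sqrt (c * u ^ 2 - σ ^ 2) ≤ u * Real.sqrt (c * v ^ 2 - σ ^ 2) := by
    intro c hc
    have h1 : v * Real.sqrt (c * u ^ 2 - σ ^ 2) = Real.sqrt (v ^ 2 * (c * u ^ 2 - σ ^ 2)) := by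
      rw [Real.sqrt_mul (sq_nonneg v), Real.sqrt_sq hv0.le]
    have h2 : u * Real.sqrt (c * v ^ 2 - σ ^ 2) = Real.sqrt (u ^ 2 * (c * v ^ 2 - σ ^ 2)) := by
      rw [Real.sqrt_mul (sq_nonneg u), Real.sqrt_sq hu0.le]
    rw [h1, h2]
    apply Real.sqrt_le_sqrt
    nlinarith [mul_nonneg (sq_nonneg σ)
      (mul_nonneg (sub_nonneg.mpr huv) (by linarith : (0:ℝ) ≤ v + u))]
  have k1 := key ((p + 1) ^ 2) (by nlinarith)
  have k2 := key 1 le_rfl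
  simp only [one_mul] at k2
  nlinarith [k1, k2]

lemma f_ge_one_aux (σ p : ℝ) (hσ : 0 < σ) (hp : 0 < p) {u : ℝ} (hu : σ < u) :
    1 ≤ (p + 2) * u / (Real.sqrt ((p + 1) ^ 2 * u ^ 2 - σ ^ 2) + Real.sqrt (u ^ 2 - σ ^ 2)) := by
  have hu0 : 0 < u := hσ.trans hu
  have hAu := sqA_pos' σ p u hσ hp hu
  have hDu : 0 < Real.sqrt ((p + 1) ^ 2 * u ^ 2 - σ ^ 2) + Real.sqrt (u ^ 2 - σ ^ 2) :=
    add_pos_of_pos_of_nonneg (Real.sqrt_pos.mpr hAu) (Real.sqrt_nonneg _)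
  rw [le_div_iff₀ hDu, one_mul]
  have h1 : Real.sqrt ((p + 1) ^ 2 * u ^ 2 - σ ^ 2) ≤ (p + 1) * u :=
    calc Real.sqrt ((p + 1) ^ 2 * u ^ 2 - σ ^ 2) ≤ Real.sqrt (((p+1)*u) ^ 2) :=
          Real.sqrt_le_sqrt (by nlinarith [sq_nonneg σ])
    _ = (p+1)*u := Real.sqrt_sq (by positivity)
  have h2 : Real.sqrt (u ^ 2 - σ ^ 2) ≤ u :=
    calc Real.sqrt (u ^ 2 - σ ^ 2) ≤ Real.sqrt (u ^ 2) :=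
          Real.sqrt_le_sqrt (by nlinarith [sq_nonneg σ])
    _ = u := Real.sqrt_sq hu0.le
  nlinarith

set_option maxHeartbeats 1000000 in
/-- Lower bound for the derivative of the phase in the study of `T⁶`. -/
theorem phase_deriv_lower_bound_T6
    (σ p γ : ℝ) (hσ : 1 ≤ σ) (hp : 0 < p) (hγ : 1 ≤ γ) :
    let ν := σ / p
    let θ : ℝ → ℝ := fun r => Real.sqrt (r ^ 2 - ν ^ 2) - ν * Real.arccos (ν / r) - Real.pi / 4
    let f : ℝ → ℝ := fun u =>
      (p + 2) * u / (Real.sqrt ((p + 1) ^ 2 * u ^ 2 - σ ^ 2) + Real.sqrt (u ^ 2 - σ ^ 2))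
    let a := f (σ + σ ^ γ) / (σ + σ ^ γ)
    let φ : ℝ → ℝ := fun u => -(a / 2) * u ^ 2 + θ ((p + 1) * u / p) - θ (u / p)
    ∀ u : ℝ, 2 * σ ≤ u →
      |f u - a * u| ≥ |σ + σ ^ γ - u| * a ∧
      |deriv φ u| ≥ |σ + σ ^ γ - u| / (σ + σ ^ γ) := by
  intro ν θ f a φ u hu
  have hσ0 : (0:ℝ) < σ := lt_of_lt_of_le one_pos hσ
  have hγ1 : (1:ℝ) ≤ σ ^ γ := Real.one_le_rpow hσ (by linarith)
  set w : ℝ := σ + σ ^ γ with hw_def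
  have hw : σ < w := by simp only [hw_def]; linarith
  have hw0 : 0 < w := hσ0.trans hw
  have hσu : σ < u := by linarith
  have hu0 : 0 < u := hσ0.trans hσu
  have hAu : (0:ℝ) < (p + 1) ^ 2 * u ^ 2 - σ ^ 2 := sqA_pos' σ p u hσ0 hp hσu
  have hBu : (0:ℝ) < u ^ 2 - σ ^ 2 := by nlinarith
  have hfw1 : 1 ≤ f w := by
    simp only [f]; exact f_ge_one_aux σ p hσ0 hp hw
  have ha0 : 0 < a := by
    simp only [a, ← hw_def]
    exact div_pos (lt_of_lt_of_le one_pos hfw1) hw0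
  have hfwa : f w = a * w := by
    simp only [a, ← hw_def]
    field_simp
  have part1 : |f u - a * u| ≥ |w - u| * a := by
    rcases le_total u w with h | h
    · have hmono : f w ≤ f u := by
        simp only [f, ← hw_def]; exact f_anti_aux σ p hσ0 hp hσu h
      rw [abs_of_nonneg (by linarith : (0:ℝ) ≤ w - u)]
      have : f u - a * u ≥ (w - u) * a := by nlinarith [hfwa]
      calc |f u - a * u| ≥ f u - a * u := le_abs_self _
        _ ≥ (w - u) * a := this
    · have hmono : f u ≤ f w := by
        simp only [f, ← hw_def]; exact f_anti_aux σ p hσ0 hp hw h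
      rw [abs_of_nonpos (by linarith : w - u ≤ 0)]
      have : -(f u - a * u) ≥ -(w - u) * a := by nlinarith [hfwa]
      calc |f u - a * u| ≥ -(f u - a * u) := neg_le_abs _
        _ ≥ -(w - u) * a := this
  refine ⟨part1, ?_⟩
  -- derivative computation
  have hν : 0 < ν := div_pos hσ0 hp
  have hr1 : ν < (p + 1) * u / p := by
    rw [div_lt_div_iff_of_pos_right hp]
    nlinarith
  have hr2 : ν < u / p := by
    rw [div_lt_div_iff_of_pos_right hp]
    exact hσu
  have hl1 : HasDerivAt (fun u : ℝ => (p + 1) * u / p) ((p + 1) / p) u := by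
    simpa using ((hasDerivAt_id u).const_mul (p + 1)).div_const p
  have hl2 : HasDerivAt (fun u : ℝ => u / p) (1 / p) u := by
    simpa using (hasDerivAt_id u).div_const p
  have hc1 : HasDerivAt (fun u : ℝ => θ ((p + 1) * u / p))
      (Real.sqrt (((p + 1) * u / p) ^ 2 - ν ^ 2) / ((p + 1) * u / p) * ((p + 1) / p)) u :=
    by have := (theta_deriv' ν hν hr1).comp u hl1; exact this
  have hc2 : HasDerivAt (fun u : ℝ => θ (u / p))
      (Real.sqrt ((u / p) ^ 2 - ν ^ 2) / (u / p) * (1 / p)) u :=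
    by have := (theta_deriv' ν hν hr2).comp u hl2; exact this
  have hquad : HasDerivAt (fun u : ℝ => -(a / 2) * u ^ 2) (-(a / 2) * (2 * u)) u := by
    simpa using (hasDerivAt_pow 2 u).const_mul (-(a / 2))
  have hφ : HasDerivAt φ
      (-(a / 2) * (2 * u) + Real.sqrt (((p + 1) * u / p) ^ 2 - ν ^ 2) / ((p + 1) * u / p) * ((p + 1) / p)
        - Real.sqrt ((u / p) ^ 2 - ν ^ 2) / (u / p) * (1 / p)) u :=
    (hquad.add hc1).sub hc2
  -- simplify the derivative value
  have e1 : ((p + 1) * u / p) ^ 2 - ν ^ 2 = ((p + 1) ^ 2 * u ^ 2 - σ ^ 2) / p ^ 2 := by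
    simp only [ν]; field_simp
  have e2 : (u / p) ^ 2 - ν ^ 2 = (u ^ 2 - σ ^ 2) / p ^ 2 := by
    simp only [ν]; field_simp
  have s1 : Real.sqrt (((p + 1) * u / p) ^ 2 - ν ^ 2)
      = Real.sqrt ((p + 1) ^ 2 * u ^ 2 - σ ^ 2) / p := by
    rw [e1, Real.sqrt_div hAu.le, Real.sqrt_sq hp.le]
  have s2 : Real.sqrt ((u / p) ^ 2 - ν ^ 2) = Real.sqrt (u ^ 2 - σ ^ 2) / p := by
    rw [e2, Real.sqrt_div hBu.le, Real.sqrt_sq hp.le]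
  set sA := Real.sqrt ((p + 1) ^ 2 * u ^ 2 - σ ^ 2) with hsA
  set sB := Real.sqrt (u ^ 2 - σ ^ 2) with hsB
  have hsA0 : 0 < sA := Real.sqrt_pos.mpr hAu
  have hsB0 : 0 < sB := Real.sqrt_pos.mpr hBu
  have hA2 : sA ^ 2 = (p + 1) ^ 2 * u ^ 2 - σ ^ 2 := Real.sq_sqrt hAu.le
  have hB2 : sB ^ 2 = u ^ 2 - σ ^ 2 := Real.sq_sqrt hBu.le
  have hS0 : 0 < sA + sB := by linarith
  have key : (sA - sB) * (sA + sB) = p * (p + 2) * u ^ 2 := by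
    linear_combination hA2 - hB2
  have hfval : f u = (p + 2) * u / (sA + sB) := by simp only [f]; rfl
  have hderiv_eq : -(a / 2) * (2 * u) + sA / p / ((p + 1) * u / p) * ((p + 1) / p)
      - sB / p / (u / p) * (1 / p) = f u - a * u := by
    rw [hfval]
    have t1 : sA / p / ((p + 1) * u / p) * ((p + 1) / p) = sA / (p * u) := by
      field_simp
    have t2 : sB / p / (u / p) * (1 / p) = sB / (p * u) := by
      field_simp
    rw [t1, t2]
    have e3 : sA / (p * u) - sB / (p * u) = (p + 2) * u / (sA + sB) := by
      rw [div_sub_div_same, div_eq_div_iff (by positivity) hS0.ne']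
      linear_combination key
    linarith [e3]
  rw [s1, s2, hderiv_eq] at hφ
  rw [hφ.deriv]
  -- final bound
  have : |w - u| / w ≤ |w - u| * a := by
    rw [div_le_iff₀ hw0]
    nlinarith [abs_nonneg (w - u), hfwa, hfw1]
  linarith [part1]
end

section
/- Let β ∈ [1/2, 1). Then the function ρ ↦ min(r,ρ)^{β−1/2} |r − ρ|^{-β} is integrable on [0,1] uniformly in r ∈ [0,1]: there is a constant C(β) such that for all r ∈ [0,1], ∫₀¹ min(r,ρ)^{β−1/2} |r−ρ|^{-β} dρ ≤ C(β). -/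
open MeasureTheory Real

theorem uniform_integrability_schur_weight (β : ℝ) (hβ1 : 1 / 2 ≤ β) (hβ2 : β < 1) :
    ∃ C : ℝ, ∀ r ∈ Set.Icc (0 : ℝ) 1,
      ∫ ρ in Set.Ioo (0 : ℝ) 1, min r ρ ^ (β - 1 / 2) * |r - ρ| ^ (-β) ≤ C := by
  have h1β : (0:ℝ) < 1 - β := by linarith
  refine ⟨2 / (1 - β), fun r hr => ?_⟩
  obtain ⟨hr0, hr1⟩ := hr
  set g : ℝ → ℝ := fun ρ => |r - ρ| ^ (-β) with hg
  have hneg : (-1 : ℝ) < -β := by linarith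
  -- integrability of g on pieces
  have hI1 : IntervalIntegrable (fun u : ℝ => u ^ (-β)) volume 0 r :=
    intervalIntegral.intervalIntegrable_rpow' hneg
  have hI1' : IntervalIntegrable (fun ρ : ℝ => (r - ρ) ^ (-β)) volume 0 r := by
    simpa using (hI1.comp_sub_left r).symm
  have hI2 : IntervalIntegrable (fun u : ℝ => u ^ (-β)) volume 0 (1 - r) :=
    intervalIntegral.intervalIntegrable_rpow' hneg
  have hI2' : IntervalIntegrable (fun ρ : ℝ => (ρ - r) ^ (-β)) volume r 1 := by
    simpa using hI2.comp_sub_right r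
  have hg1 : ∀ ρ ∈ Set.Ioc (0:ℝ) r, g ρ = (r - ρ) ^ (-β) := by
    intro ρ hρ
    rw [hg]
    simp only []
    rw [abs_of_nonneg (by linarith [hρ.2])]
  have hg2 : ∀ ρ ∈ Set.Ioc r (1:ℝ), g ρ = (ρ - r) ^ (-β) := by
    intro ρ hρ
    rw [hg]
    simp only []
    rw [abs_of_nonpos (by linarith [hρ.1]), neg_sub]
  have hgint1 : IntegrableOn g (Set.Ioc 0 r) := by
    refine (IntegrableOn.congr_fun ?_ (fun ρ hρ => (hg1 ρ hρ).symm) measurableSet_Ioc)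
    exact (intervalIntegrable_iff_integrableOn_Ioc_of_le hr0).mp hI1'
  have hgint2 : IntegrableOn g (Set.Ioc r 1) := by
    refine (IntegrableOn.congr_fun ?_ (fun ρ hρ => (hg2 ρ hρ).symm) measurableSet_Ioc)
    exact (intervalIntegrable_iff_integrableOn_Ioc_of_le hr1).mp hI2'
  have hsub : Set.Ioo (0:ℝ) 1 ⊆ Set.Ioc 0 r ∪ Set.Ioc r 1 := by
    intro ρ hρ
    rcases le_or_gt ρ r with h | h
    · exact Or.inl ⟨hρ.1, h⟩
    · exact Or.inr ⟨h, hρ.2.le⟩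
  have hgint : IntegrableOn g (Set.Ioo 0 1) :=
    (hgint1.union hgint2).mono_set hsub
  -- pointwise bound
  have hbound : ∀ ρ ∈ Set.Ioo (0:ℝ) 1,
      min r ρ ^ (β - 1 / 2) * |r - ρ| ^ (-β) ≤ g ρ := by
    intro ρ hρ
    have h1 : min r ρ ^ (β - 1 / 2) ≤ 1 := by
      apply Real.rpow_le_one (le_min hr0 hρ.1.le)
      · exact min_le_of_right_le hρ.2.le
      · linarith
    exact mul_le_of_le_one_left (Real.rpow_nonneg (abs_nonneg _) _) h1
  have hnn : ∀ ρ ∈ Set.Ioo (0:ℝ) 1,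
      0 ≤ min r ρ ^ (β - 1 / 2) * |r - ρ| ^ (-β) := by
    intro ρ hρ
    exact mul_nonneg (Real.rpow_nonneg (le_min hr0 hρ.1.le) _)
      (Real.rpow_nonneg (abs_nonneg _) _)
  have hmono : ∫ ρ in Set.Ioo (0:ℝ) 1, min r ρ ^ (β - 1 / 2) * |r - ρ| ^ (-β)
      ≤ ∫ ρ in Set.Ioo (0:ℝ) 1, g ρ := by
    refine integral_mono_of_nonneg ?_ hgint ?_
    · exact (ae_restrict_iff' measurableSet_Ioo).mpr (Filter.Eventually.of_forall hnn)
    · exact (ae_restrict_iff' measurableSet_Ioo).mpr (Filter.Eventually.of_forall hbound)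
  refine hmono.trans ?_
  -- now bound ∫ g over Ioo 0 1
  have hgnn : ∀ ρ, 0 ≤ g ρ := fun ρ => Real.rpow_nonneg (abs_nonneg _) _
  have hmono2 : ∫ ρ in Set.Ioo (0:ℝ) 1, g ρ
      ≤ ∫ ρ in Set.Ioc 0 r ∪ Set.Ioc r 1, g ρ := by
    apply setIntegral_mono_set (hgint1.union hgint2)
      (Filter.Eventually.of_forall hgnn) (HasSubset.Subset.eventuallyLE hsub)
  refine hmono2.trans ?_
  have hdisj : Disjoint (Set.Ioc (0:ℝ) r) (Set.Ioc r 1) := Set.Ioc_disjoint_Ioc_of_le le_rfl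
  rw [setIntegral_union hdisj measurableSet_Ioc hgint1 hgint2]
  have e1 : ∫ ρ in Set.Ioc (0:ℝ) r, g ρ = r ^ (1 - β) / (1 - β) := by
    rw [setIntegral_congr_fun measurableSet_Ioc hg1]
    rw [← intervalIntegral.integral_of_le hr0]
    rw [intervalIntegral.integral_comp_sub_left (fun u => u ^ (-β)) r]
    simp only [sub_zero, sub_self]
    rw [integral_rpow (Or.inl hneg)]
    rw [Real.zero_rpow (by linarith : -β + 1 ≠ 0)]
    ring_nf
  have e2 : ∫ ρ in Set.Ioc r (1:ℝ), g ρ = (1 - r) ^ (1 - β) / (1 - β) := by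
    rw [setIntegral_congr_fun measurableSet_Ioc hg2]
    rw [← intervalIntegral.integral_of_le hr1]
    rw [intervalIntegral.integral_comp_sub_right (fun u => u ^ (-β)) r]
    simp only [sub_self]
    rw [integral_rpow (Or.inl hneg)]
    rw [Real.zero_rpow (by linarith : -β + 1 ≠ 0)]
    ring_nf
  rw [e1, e2]
  have b1 : r ^ (1 - β) ≤ 1 := Real.rpow_le_one hr0 hr1 h1β.le
  have b2 : (1 - r) ^ (1 - β) ≤ 1 := Real.rpow_le_one (by linarith) (by linarith) h1β.le
  rw [← add_div]
  rw [div_le_div_iff₀ h1β h1β]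
  nlinarith
end
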